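/- Let b, b̄ be positive sequences of length m, θ⁰ ∈ ℝ^m satisfy Σ_k b_k^{-2}(b̄_k - b_k)²(θ⁰_k)² > C₂ ρ² where ρ² = ε²(Σ_k b_k^{-4})^{1/2}, and define θ by b_kθ_k = b̄_kθ⁰_k + ω_k τ R b̄_k^{-1}/(Σ_j b̄_j^{-4})^{1/2} with signs ω_k ∈ {±1}, τ ∈ (0,1], R² = c·ε²(Σ_j b̄_j^{-4})^{1/2} for some c > 0. Then for every γ ∈ (0,1), Σ_{k=1}^m (θ_k - θ⁰_k)² ≥ ((1-γ)C₂ + (1-γ⁻¹)τ²c) · ρ². -/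

import Mathlib

set_option maxHeartbeats 1000000 in
theorem perturbed_signal_separation {m : ℕ} (hm : 0 < m)
    (b bbar θ θ0 : Fin m → ℝ) (ω : Fin m → ℝ) (τ R ε C₂ c : ℝ)
    (hb : ∀ k, 0 < b k) (hbbar : ∀ k, 0 < bbar k)
    (hω : ∀ k, ω k = 1 ∨ ω k = -1)
    (hτ : τ ∈ Set.Ioc (0 : ℝ) 1) (hR : 0 < R) (hε : 0 < ε) (hc : 0 < c)
    (hR2 : R ^ 2 = c * ε ^ 2 * Real.sqrt (∑ j, (bbar j)⁻¹ ^ 4))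
    (hsep : ∑ k, (b k)⁻¹ ^ 2 * (bbar k - b k) ^ 2 * θ0 k ^ 2
      > C₂ * (ε ^ 2 * Real.sqrt (∑ k, (b k)⁻¹ ^ 4)))
    (hθ : ∀ k, b k * θ k
      = bbar k * θ0 k + ω k * (τ * R * (bbar k)⁻¹ / Real.sqrt (∑ j, (bbar j)⁻¹ ^ 4))) :
    ∀ γ : ℝ, γ ∈ Set.Ioo (0 : ℝ) 1 →
      ∑ k, (θ k - θ0 k) ^ 2
        ≥ ((1 - γ) * C₂ + (1 - γ⁻¹) * τ ^ 2 * c)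
            * (ε ^ 2 * Real.sqrt (∑ k, (b k)⁻¹ ^ 4)) := by
  intro γ hγ
  obtain ⟨hγ0, hγ1⟩ := hγ
  obtain ⟨hτ0, hτ1⟩ := hτ
  have hne : Nonempty (Fin m) := ⟨⟨0, hm⟩⟩
  have hSbsum : 0 < ∑ k, (b k)⁻¹ ^ 4 :=
    Finset.sum_pos (fun k _ => by have := hb k; positivity) Finset.univ_nonempty
  have hSbbsum : 0 < ∑ j, (bbar j)⁻¹ ^ 4 :=
    Finset.sum_pos (fun k _ => by have := hbbar k; positivity) Finset.univ_nonempty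
  set Sb := Real.sqrt (∑ k, (b k)⁻¹ ^ 4) with hSbdef
  set Sbb := Real.sqrt (∑ j, (bbar j)⁻¹ ^ 4) with hSbbdef
  have hSb : 0 < Sb := Real.sqrt_pos.mpr hSbsum
  have hSbb : 0 < Sbb := Real.sqrt_pos.mpr hSbbsum
  have hSb2 : Sb ^ 2 = ∑ k, (b k)⁻¹ ^ 4 := Real.sq_sqrt hSbsum.le
  have hSbb2 : Sbb ^ 2 = ∑ j, (bbar j)⁻¹ ^ 4 := Real.sq_sqrt hSbbsum.le
  -- elementary inequality
  have elem : ∀ a e : ℝ, (1 - γ) * a ^ 2 + (1 - γ⁻¹) * e ^ 2 ≤ (a + e) ^ 2 := by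
    intro a e
    have h1 : 0 ≤ γ⁻¹ * (γ * a + e) ^ 2 := by positivity
    have h2 : γ * γ⁻¹ = 1 := mul_inv_cancel₀ hγ0.ne'
    nlinarith [h1, h2]
  -- pointwise bound
  have key : ∀ k, (1 - γ) * ((b k)⁻¹ ^ 2 * (bbar k - b k) ^ 2 * θ0 k ^ 2)
      + (1 - γ⁻¹) * (τ ^ 2 * R ^ 2 / Sbb ^ 2 * ((b k)⁻¹ ^ 2 * (bbar k)⁻¹ ^ 2))
      ≤ (θ k - θ0 k) ^ 2 := by
    intro k
    have hbk := hb k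
    have hdiff : b k * (θ k - θ0 k)
        = (bbar k - b k) * θ0 k + ω k * (τ * R * (bbar k)⁻¹ / Sbb) := by
      rw [mul_sub, hθ k]; ring
    have hsq : (θ k - θ0 k) ^ 2
        = (b k)⁻¹ ^ 2 * ((bbar k - b k) * θ0 k + ω k * (τ * R * (bbar k)⁻¹ / Sbb)) ^ 2 := by
      rw [← hdiff]
      field_simp
    have hω2 : (ω k) ^ 2 = 1 := by rcases hω k with h | h <;> simp [h]
    have he : (ω k * (τ * R * (bbar k)⁻¹ / Sbb)) ^ 2
        = τ ^ 2 * R ^ 2 / Sbb ^ 2 * (bbar k)⁻¹ ^ 2 := by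
      rw [mul_pow, hω2]; field_simp
    have hel := elem ((bbar k - b k) * θ0 k) (ω k * (τ * R * (bbar k)⁻¹ / Sbb))
    rw [he] at hel
    rw [hsq]
    have hb2 : 0 ≤ (b k)⁻¹ ^ 2 := by positivity
    calc (1 - γ) * ((b k)⁻¹ ^ 2 * (bbar k - b k) ^ 2 * θ0 k ^ 2)
          + (1 - γ⁻¹) * (τ ^ 2 * R ^ 2 / Sbb ^ 2 * ((b k)⁻¹ ^ 2 * (bbar k)⁻¹ ^ 2))
        = (b k)⁻¹ ^ 2 * ((1 - γ) * ((bbar k - b k) * θ0 k) ^ 2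
            + (1 - γ⁻¹) * (τ ^ 2 * R ^ 2 / Sbb ^ 2 * (bbar k)⁻¹ ^ 2)) := by ring
      _ ≤ (b k)⁻¹ ^ 2 * ((bbar k - b k) * θ0 k + ω k * (τ * R * (bbar k)⁻¹ / Sbb)) ^ 2 := by
          apply mul_le_mul_of_nonneg_left _ hb2
          linarith [hel]
  -- sum the pointwise bound
  have sum_ge : (1 - γ) * (∑ k, (b k)⁻¹ ^ 2 * (bbar k - b k) ^ 2 * θ0 k ^ 2)
      + (1 - γ⁻¹) * (τ ^ 2 * R ^ 2 / Sbb ^ 2 * ∑ k, (b k)⁻¹ ^ 2 * (bbar k)⁻¹ ^ 2)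
      ≤ ∑ k, (θ k - θ0 k) ^ 2 := by
    have := Finset.sum_le_sum (s := Finset.univ) (fun k _ => key k)
    calc (1 - γ) * (∑ k, (b k)⁻¹ ^ 2 * (bbar k - b k) ^ 2 * θ0 k ^ 2)
        + (1 - γ⁻¹) * (τ ^ 2 * R ^ 2 / Sbb ^ 2 * ∑ k, (b k)⁻¹ ^ 2 * (bbar k)⁻¹ ^ 2)
        = ∑ k, ((1 - γ) * ((b k)⁻¹ ^ 2 * (bbar k - b k) ^ 2 * θ0 k ^ 2)
            + (1 - γ⁻¹) * (τ ^ 2 * R ^ 2 / Sbb ^ 2 * ((b k)⁻¹ ^ 2 * (bbar k)⁻¹ ^ 2))) := by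
          rw [Finset.sum_add_distrib, ← Finset.mul_sum, ← Finset.mul_sum, ← Finset.mul_sum]
      _ ≤ _ := this
  -- Cauchy–Schwarz
  have cs : ∑ k, (b k)⁻¹ ^ 2 * (bbar k)⁻¹ ^ 2 ≤ Sb * Sbb := by
    have hcs := Finset.sum_mul_sq_le_sq_mul_sq Finset.univ
      (fun k => (b k)⁻¹ ^ 2) (fun k => (bbar k)⁻¹ ^ 2)
    have hnn : 0 ≤ ∑ k, (b k)⁻¹ ^ 2 * (bbar k)⁻¹ ^ 2 := by
      apply Finset.sum_nonneg; intro k _; positivity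
    have hsq : (∑ k, (b k)⁻¹ ^ 2 * (bbar k)⁻¹ ^ 2) ^ 2 ≤ (Sb * Sbb) ^ 2 := by
      rw [mul_pow, hSb2, hSbb2]
      calc (∑ k, (b k)⁻¹ ^ 2 * (bbar k)⁻¹ ^ 2) ^ 2
          ≤ (∑ k, ((b k)⁻¹ ^ 2) ^ 2) * ∑ k, ((bbar k)⁻¹ ^ 2) ^ 2 := hcs
        _ = (∑ k, (b k)⁻¹ ^ 4) * ∑ k, (bbar k)⁻¹ ^ 4 := by
            congr 1 <;> apply Finset.sum_congr rfl <;> intro k _ <;> ring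
    calc ∑ k, (b k)⁻¹ ^ 2 * (bbar k)⁻¹ ^ 2
        = Real.sqrt ((∑ k, (b k)⁻¹ ^ 2 * (bbar k)⁻¹ ^ 2) ^ 2) := (Real.sqrt_sq hnn).symm
      _ ≤ Real.sqrt ((Sb * Sbb) ^ 2) := Real.sqrt_le_sqrt hsq
      _ = Sb * Sbb := Real.sqrt_sq (by positivity)
  -- assemble
  have hγinv : 1 ≤ γ⁻¹ := by
    have h := mul_inv_cancel₀ hγ0.ne'
    have h2 : 0 < γ⁻¹ := inv_pos.mpr hγ0
    nlinarith
  have hcoef : 0 ≤ τ ^ 2 * R ^ 2 / Sbb ^ 2 := by positivity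
  have hterm2 : τ ^ 2 * R ^ 2 / Sbb ^ 2 * (Sb * Sbb) = τ ^ 2 * c * ε ^ 2 * Sb := by
    rw [hR2]
    field_simp
  have h2 : (1 - γ⁻¹) * (τ ^ 2 * R ^ 2 / Sbb ^ 2 * ∑ k, (b k)⁻¹ ^ 2 * (bbar k)⁻¹ ^ 2)
      ≥ (1 - γ⁻¹) * (τ ^ 2 * c * ε ^ 2 * Sb) := by
    rw [← hterm2]
    apply mul_le_mul_of_nonpos_left _ (by linarith)
    exact mul_le_mul_of_nonneg_left cs hcoef
  have h1 : (1 - γ) * (∑ k, (b k)⁻¹ ^ 2 * (bbar k - b k) ^ 2 * θ0 k ^ 2)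
      ≥ (1 - γ) * (C₂ * (ε ^ 2 * Sb)) :=
    mul_le_mul_of_nonneg_left hsep.le (by linarith)
  have hfinal : ((1 - γ) * C₂ + (1 - γ⁻¹) * τ ^ 2 * c) * (ε ^ 2 * Sb)
      = (1 - γ) * (C₂ * (ε ^ 2 * Sb)) + (1 - γ⁻¹) * (τ ^ 2 * c * ε ^ 2 * Sb) := by ring
  rw [hfinal]
  linarith [sum_ge, h1, h2]
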